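/- Let p be a prime number, A a commutative ring, and t ∈ A. In the ring B = A[X,Y]/(X^p − t·X, Y^p − t·Y), the intersection of the ideal generated by x^{p−1} − t and the ideal generated by y^{p−1} − t equals the principal ideal generated by the product (x^{p−1} − t)·(y^{p−1} − t). -/

import Mathlib

open MvPolynomial

set_option synthInstance.maxHeartbeats 1000000
set_option maxHeartbeats 1000000


lemma aux_poly {R : Type*} [CommRing R] {M U V : Polynomial R} {c : R}
    (hM : M.Monic) (h : M * U = Polynomial.C c * V) :
    Polynomial.C c ∣ U := by
  nontriviality R
  have hV : V = M * (V /ₘ M) + V %ₘ M := by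
    conv_lhs => rw [← Polynomial.modByMonic_add_div V M]
    ring
  have key : M * (U - Polynomial.C c * (V /ₘ M)) = Polynomial.C c * (V %ₘ M) := by
    rw [hV] at h; linear_combination h
  by_cases h0 : U - Polynomial.C c * (V /ₘ M) = 0
  · exact ⟨V /ₘ M, by linear_combination h0⟩
  · exfalso
    have h1 : M.degree ≤ (M * (U - Polynomial.C c * (V /ₘ M))).degree := by
      rw [mul_comm, hM.degree_mul]
      exact le_add_of_nonneg_left (Polynomial.zero_le_degree_iff.mpr h0)
    rw [key] at h1
    have h2 : (Polynomial.C c * (V %ₘ M)).degree < M.degree := by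
      calc (Polynomial.C c * (V %ₘ M)).degree
          ≤ (Polynomial.C c).degree + (V %ₘ M).degree := Polynomial.degree_mul_le _ _
        _ ≤ 0 + (V %ₘ M).degree := add_le_add Polynomial.degree_C_le le_rfl
        _ = (V %ₘ M).degree := zero_add _
        _ < M.degree := Polynomial.degree_modByMonic_lt V hM
    exact absurd (lt_of_le_of_lt h1 h2) (lt_irrefl _)

lemma aux_mv {A : Type} [CommRing A] (t : A) {p : ℕ} (hp : 2 ≤ p)
    {U V : MvPolynomial (Fin 2) A}
    (h : ((X 0 : MvPolynomial (Fin 2) A) ^ (p-1) - C t) * U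
        = ((X 1 : MvPolynomial (Fin 2) A) ^ (p-1) - C t) * V) :
    ((X 1 : MvPolynomial (Fin 2) A) ^ (p-1) - C t) ∣ U := by
  let e := finSuccEquiv A 1
  have hX1 : (X 1 : MvPolynomial (Fin 2) A) = X (Fin.succ 0) := rfl
  have h' := congrArg e h
  simp only [map_mul, map_sub, map_pow, hX1, e, finSuccEquiv_X_zero, finSuccEquiv_X_succ] at h'
  have hC : (finSuccEquiv A 1) (C t) = Polynomial.C (C t) := by
    simp [finSuccEquiv_apply]
  rw [hC] at h'
  have hM : (Polynomial.X ^ (p-1) - Polynomial.C (C t) :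
      Polynomial (MvPolynomial (Fin 1) A)).Monic := by
    apply Polynomial.monic_X_pow_sub_C
    omega
  rw [← Polynomial.C_pow, ← Polynomial.C_sub] at h'
  have hdvd := aux_poly hM h'
  obtain ⟨k, hk⟩ := hdvd
  refine ⟨(finSuccEquiv A 1).symm k, (finSuccEquiv A 1).injective ?_⟩
  rw [map_mul, AlgEquiv.apply_symm_apply]
  rw [hk]
  congr 1
  simp [hX1, e, finSuccEquiv_X_succ, hC, map_sub, map_pow]


theorem stmt3 (p : ℕ) (hp : p.Prime) (A : Type) [CommRing A] (t : A) :
    let B := MvPolynomial (Fin 2) A ⧸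
      Ideal.span {(X 0 : MvPolynomial (Fin 2) A) ^ p - C t * X 0,
                  (X 1 : MvPolynomial (Fin 2) A) ^ p - C t * X 1}
    let x : B := Ideal.Quotient.mk _ (X 0)
    let y : B := Ideal.Quotient.mk _ (X 1)
    let tB : B := Ideal.Quotient.mk _ (C t)
    Ideal.span {x ^ (p - 1) - tB} ⊓ Ideal.span {y ^ (p - 1) - tB} =
      Ideal.span {(x ^ (p - 1) - tB) * (y ^ (p - 1) - tB)} := by
  intro B x y tB
  have hp2 : 2 ≤ p := hp.two_le
  set f : MvPolynomial (Fin 2) A := X 0 ^ p - C t * X 0 with hf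
  set g : MvPolynomial (Fin 2) A := X 1 ^ p - C t * X 1 with hg
  set I : Ideal (MvPolynomial (Fin 2) A) := Ideal.span {f, g} with hI
  set a : MvPolynomial (Fin 2) A := X 0 ^ (p-1) - C t with ha
  set b : MvPolynomial (Fin 2) A := X 1 ^ (p-1) - C t with hb
  have hxp : (X 0 : MvPolynomial (Fin 2) A) ^ p = X 0 ^ (p-1) * X 0 := by
    rw [← pow_succ, Nat.sub_add_cancel (by omega)]
  have hyp : (X 1 : MvPolynomial (Fin 2) A) ^ p = X 1 ^ (p-1) * X 1 := by
    rw [← pow_succ, Nat.sub_add_cancel (by omega)]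
  have hfI : f ∈ I := Ideal.subset_span (by simp)
  have hgI : g ∈ I := Ideal.subset_span (by simp)
  have hxa : x ^ (p-1) - tB = Ideal.Quotient.mk I a := by
    simp only [x, tB, ha, map_sub, map_pow]
    rfl
  have hyb : y ^ (p-1) - tB = Ideal.Quotient.mk I b := by
    simp only [y, tB, hb, map_sub, map_pow]
    rfl
  rw [hxa, hyb]
  apply le_antisymm
  · rintro z hz
    rw [Ideal.mem_inf] at hz
    obtain ⟨hza, hzb⟩ := hz
    rw [Ideal.mem_span_singleton] at hza hzb
    obtain ⟨u, hu⟩ := hza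
    obtain ⟨w, hw⟩ := hzb
    obtain ⟨u₀, rfl⟩ := Ideal.Quotient.mk_surjective u
    obtain ⟨w₀, rfl⟩ := Ideal.Quotient.mk_surjective w
    have heq : Ideal.Quotient.mk I (a * u₀) = Ideal.Quotient.mk I (b * w₀) := by
      rw [map_mul, map_mul, ← hu, ← hw]
    rw [Ideal.Quotient.eq] at heq
    rw [hI, Ideal.mem_span_pair] at heq
    obtain ⟨s, v, hsv⟩ := heq
    have key : a * (u₀ - s * X 0) = b * (w₀ + v * X 1) := by
      rw [ha, hb]
      rw [hf, hg] at hsv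
      linear_combination -hsv + s * hxp + v * hyp
    have hdvd : b ∣ (u₀ - s * X 0) := aux_mv t hp2 key
    obtain ⟨q, hq⟩ := hdvd
    rw [Ideal.mem_span_singleton]
    refine ⟨Ideal.Quotient.mk I q, ?_⟩
    have hz' : z = Ideal.Quotient.mk I (a * u₀) := by rw [map_mul, ← hu]
    have hfz : Ideal.Quotient.mk I f = 0 := Ideal.Quotient.eq_zero_iff_mem.mpr hfI
    have hexp : a * u₀ = s * f + a * b * q := by
      rw [ha, hb, hf]
      rw [hb] at hq
      linear_combination (X 0 ^ (p-1) - C t) * hq - s * hxp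
    rw [hz', hexp, map_add, map_mul, hfz, mul_zero, zero_add, map_mul, map_mul]

  · apply le_inf
    · rw [Ideal.span_singleton_le_span_singleton]
      exact ⟨Ideal.Quotient.mk I b, rfl⟩
    · rw [Ideal.span_singleton_le_span_singleton]
      exact ⟨Ideal.Quotient.mk I a, mul_comm _ _⟩
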